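/- arXiv:2007.05656 — 3 statements merged into one kernel-verified Lean document; each statement's English description precedes it below -/
import Mathlib

section
/- Let n ≥ 5, let W_{n−1} be the wheel graph on {1,…,n} with edge set E, and fix x ∈ [0,1]^n. For every subset T ⊆ {1,…,n−1} with T ∩ (T+1) = ∅ (indices cyclic modulo n−1) and every (x,y) ∈ T(W_{n−1}), we have ∑_{{i,j}∈E} y_{ij} ≥ φ(T). In particular, min{∑_{{i,j}∈E} y_{ij} : (x,y) ∈ T(W_{n−1})} ≥ Φ*. -/
open Finset

/-- Cyclic successor on the rim `{1, …, n-1}` of the wheel `W_{n-1}`. -/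
def wsucc (n i : ℕ) : ℕ := if i = n - 1 then 1 else i + 1

/-- Membership in the polytope `T(W_{n-1})`. -/
def memTW (n : ℕ) (x : ℕ → ℝ) (y : ℕ → ℕ → ℝ) : Prop :=
  (∀ i ∈ Finset.Icc 1 n, 0 ≤ x i ∧ x i ≤ 1) ∧
  (∀ i ∈ Finset.Icc 1 (n - 1),
      0 ≤ y i (wsucc n i) ∧ y i (wsucc n i) ≤ x i ∧
      y i (wsucc n i) ≤ x (wsucc n i) ∧ x i + x (wsucc n i) - y i (wsucc n i) ≤ 1) ∧
  (∀ i ∈ Finset.Icc 1 (n - 1),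
      0 ≤ y i n ∧ y i n ≤ x i ∧ y i n ≤ x n ∧ x i + x n - y i n ≤ 1) ∧
  (∀ i ∈ Finset.Icc 1 (n - 1),
      y i (wsucc n i) + y i n + y (wsucc n i) n ≥ x i + x (wsucc n i) + x n - 1)

/-- The sum of the `y`-variables over all edges of the wheel `W_{n-1}`. -/
noncomputable def edgeSumW (n : ℕ) (y : ℕ → ℕ → ℝ) : ℝ :=
  ∑ i ∈ Finset.Icc 1 (n - 1), y i (wsucc n i) + ∑ i ∈ Finset.Icc 1 (n - 1), y i n

/-- The dual bound `φ(T)`. -/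
noncomputable def phiW (n : ℕ) (x : ℕ → ℝ) (T : Finset ℕ) : ℝ :=
  ∑ i ∈ Finset.Icc 1 (n - 1) \ T, max 0 (x i + x (wsucc n i) - 1) +
  ∑ i ∈ Finset.Icc 1 (n - 1) \ (T ∪ T.image (wsucc n)), max 0 (x i + x n - 1) +
  ∑ i ∈ T, max 0 (x i + x (wsucc n i) + x n - 1)

/-- `Φ* = max{φ(T) : T ⊆ {1,…,n-1}, T ∩ (T+1) = ∅}`. -/
noncomputable def phiStarW (n : ℕ) (x : ℕ → ℝ) : ℝ :=
  ((Finset.Icc 1 (n - 1)).powerset.filter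
      (fun T => T ∩ T.image (wsucc n) = ∅)).sup'
    ⟨∅, by simp⟩ (phiW n x)

lemma wsucc_mem {n : ℕ} (hn : 5 ≤ n) {i : ℕ} (hi : i ∈ Finset.Icc 1 (n - 1)) :
    wsucc n i ∈ Finset.Icc 1 (n - 1) := by
  simp only [Finset.mem_Icc] at hi ⊢
  unfold wsucc
  split_ifs with h
  · omega
  · omega

lemma wsucc_injOn {n : ℕ} (hn : 5 ≤ n) {i j : ℕ} (hi : i ∈ Finset.Icc 1 (n - 1))
    (hj : j ∈ Finset.Icc 1 (n - 1)) (h : wsucc n i = wsucc n j) : i = j := by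
  simp only [Finset.mem_Icc] at hi hj
  unfold wsucc at h
  split_ifs at h with h1 h2 h2 <;> omega

theorem wheel_dual_lower_bound (n : ℕ) (hn : 5 ≤ n) (x : ℕ → ℝ)
    (hx : ∀ i ∈ Finset.Icc 1 n, 0 ≤ x i ∧ x i ≤ 1) :
    (∀ T ⊆ Finset.Icc 1 (n - 1), T ∩ T.image (wsucc n) = ∅ →
        ∀ y : ℕ → ℕ → ℝ, memTW n x y → phiW n x T ≤ edgeSumW n y) ∧
    (∀ y : ℕ → ℕ → ℝ, memTW n x y → phiStarW n x ≤ edgeSumW n y) := by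
  have main : ∀ T ⊆ Finset.Icc 1 (n - 1), T ∩ T.image (wsucc n) = ∅ →
      ∀ y : ℕ → ℕ → ℝ, memTW n x y → phiW n x T ≤ edgeSumW n y := by
    intro T hT hdisj y hy
    obtain ⟨hxm, hrim, hspoke, htri⟩ := hy
    set S := Finset.Icc 1 (n - 1) with hS
    have hdisj' : Disjoint T (T.image (wsucc n)) :=
      Finset.disjoint_iff_inter_eq_empty.mpr hdisj
    have himg : T.image (wsucc n) ⊆ S := by
      intro j hj
      obtain ⟨i, hi, rfl⟩ := Finset.mem_image.mp hj
      exact wsucc_mem hn (hT hi)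
    have hunion : T ∪ T.image (wsucc n) ⊆ S := Finset.union_subset hT himg
    -- decompose the rim sum
    have e1 : ∑ i ∈ S, y i (wsucc n i)
        = ∑ i ∈ S \ T, y i (wsucc n i) + ∑ i ∈ T, y i (wsucc n i) :=
      (Finset.sum_sdiff hT).symm
    -- decompose the spoke sum
    have e2 : ∑ i ∈ S, y i n
        = ∑ i ∈ S \ (T ∪ T.image (wsucc n)), y i n + ∑ i ∈ T ∪ T.image (wsucc n), y i n :=
      (Finset.sum_sdiff hunion).symm
    have e3 : ∑ i ∈ T ∪ T.image (wsucc n), y i n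
        = ∑ i ∈ T, y i n + ∑ i ∈ T, y (wsucc n i) n := by
      rw [Finset.sum_union hdisj', Finset.sum_image]
      intro i hi j hj h
      exact wsucc_injOn hn (hT hi) (hT hj) h
    -- per-term bounds
    have b1 : ∑ i ∈ S \ T, max 0 (x i + x (wsucc n i) - 1)
        ≤ ∑ i ∈ S \ T, y i (wsucc n i) := by
      refine Finset.sum_le_sum fun i hi => ?_
      have hi' : i ∈ S := (Finset.mem_sdiff.mp hi).1
      obtain ⟨h0, _, _, h4⟩ := hrim i hi'
      exact max_le h0 (by linarith)
    have b2 : ∑ i ∈ S \ (T ∪ T.image (wsucc n)), max 0 (x i + x n - 1)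
        ≤ ∑ i ∈ S \ (T ∪ T.image (wsucc n)), y i n := by
      refine Finset.sum_le_sum fun i hi => ?_
      have hi' : i ∈ S := (Finset.mem_sdiff.mp hi).1
      obtain ⟨h0, _, _, h4⟩ := hspoke i hi'
      exact max_le h0 (by linarith)
    have b3 : ∑ i ∈ T, max 0 (x i + x (wsucc n i) + x n - 1)
        ≤ ∑ i ∈ T, (y i (wsucc n i) + (y i n + y (wsucc n i) n)) := by
      refine Finset.sum_le_sum fun i hi => ?_
      have hi' : i ∈ S := hT hi
      have hsi : wsucc n i ∈ S := wsucc_mem hn hi'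
      obtain ⟨h0, _, _, _⟩ := hrim i hi'
      obtain ⟨h0', _, _, _⟩ := hspoke i hi'
      obtain ⟨h0'', _, _, _⟩ := hspoke (wsucc n i) hsi
      have ht := htri i hi'
      exact max_le (by linarith) (by linarith)
    have e4 : ∑ i ∈ T, (y i (wsucc n i) + (y i n + y (wsucc n i) n))
        = ∑ i ∈ T, y i (wsucc n i) + (∑ i ∈ T, y i n + ∑ i ∈ T, y (wsucc n i) n) := by
      rw [Finset.sum_add_distrib, Finset.sum_add_distrib]
    unfold phiW edgeSumW
    rw [← hS, e1, e2, e3]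
    linarith [b1, b2, b3, e4]
  refine ⟨main, fun y hy => ?_⟩
  refine Finset.sup'_le _ _ fun T hT => ?_
  simp only [Finset.mem_filter, Finset.mem_powerset] at hT
  exact main T hT.1 hT.2 y hy
end

section
/- Let n ≥ 5 and x ∈ [0,1]^n. There exists a set T ⊆ {1,…,n−1} satisfying all of the following: (P1) T ∩ (T+1) = ∅ (indices cyclic modulo n−1); (P2) φ(T) = Φ*; (P3) 1 ≤ x_i + x_{i+1} + x_n ≤ 2 for all i ∈ T; (P4) for every i ∈ {1,…,n−1} with 1 ≤ x_i + x_{i+1} + x_n ≤ 2 we have {i−1, i, i+1} ∩ T ≠ ∅ (indices cyclic modulo n−1). -/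
open Finset

/-- Cyclic predecessor on the rim `{1, …, n-1}` of the wheel `W_{n-1}`. -/
def wpred (n i : ℕ) : ℕ := if i = 1 then n - 1 else i - 1
lemma wsucc_mem_Icc {n : ℕ} (hn : 5 ≤ n) {i : ℕ} (hi : i ∈ Finset.Icc 1 (n-1)) :
    wsucc n i ∈ Finset.Icc 1 (n-1) := by
  unfold wsucc; rw [Finset.mem_Icc] at *; split_ifs <;> omega

lemma wsucc_ne {n : ℕ} (hn : 5 ≤ n) {i : ℕ} (hi : i ∈ Finset.Icc 1 (n-1)) :
    wsucc n i ≠ i := by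
  unfold wsucc; rw [Finset.mem_Icc] at hi; split_ifs <;> omega

lemma wsucc_inj {n : ℕ} (hn : 5 ≤ n) {i j : ℕ} (hi : i ∈ Finset.Icc 1 (n-1))
    (hj : j ∈ Finset.Icc 1 (n-1)) (h : wsucc n i = wsucc n j) : i = j := by
  unfold wsucc at h; rw [Finset.mem_Icc] at hi hj; split_ifs at h <;> omega

lemma wpred_mem_Icc {n : ℕ} (hn : 5 ≤ n) {i : ℕ} (hi : i ∈ Finset.Icc 1 (n-1)) :
    wpred n i ∈ Finset.Icc 1 (n-1) := by
  unfold wpred; rw [Finset.mem_Icc] at *; split_ifs <;> omega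

lemma wsucc_wpred {n : ℕ} (hn : 5 ≤ n) {i : ℕ} (hi : i ∈ Finset.Icc 1 (n-1)) :
    wsucc n (wpred n i) = i := by
  unfold wsucc wpred; rw [Finset.mem_Icc] at hi; split_ifs <;> omega

lemma wpred_wsucc {n : ℕ} (hn : 5 ≤ n) {i : ℕ} (hi : i ∈ Finset.Icc 1 (n-1)) :
    wpred n (wsucc n i) = i := by
  unfold wsucc wpred; rw [Finset.mem_Icc] at hi; split_ifs <;> omega

lemma mem_image_wsucc {n : ℕ} (hn : 5 ≤ n) {T : Finset ℕ} (hT : T ⊆ Finset.Icc 1 (n-1))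
    {i : ℕ} (hi : i ∈ Finset.Icc 1 (n-1)) :
    i ∈ T.image (wsucc n) ↔ wpred n i ∈ T := by
  simp only [Finset.mem_image]
  constructor
  · rintro ⟨j, hj, rfl⟩
    rwa [wpred_wsucc hn (hT hj)]
  · intro h
    exact ⟨wpred n i, h, wsucc_wpred hn hi⟩

lemma tri_le {a b c : ℝ} (ha : 0 ≤ a) (hb : 0 ≤ b) (hc : 0 ≤ c)
    (ha1 : a ≤ 1) (hb1 : b ≤ 1) (hc1 : c ≤ 1) (hs : a + b + c ≤ 2) :
    max 0 (a+b-1) + max 0 (a+c-1) + max 0 (b+c-1) ≤ max 0 (a+b+c-1) := by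
  rcases max_cases 0 (a+b-1) with ⟨e1, l1⟩ | ⟨e1, l1⟩ <;>
  rcases max_cases 0 (a+c-1) with ⟨e2, l2⟩ | ⟨e2, l2⟩ <;>
  rcases max_cases 0 (b+c-1) with ⟨e3, l3⟩ | ⟨e3, l3⟩ <;>
  rcases max_cases 0 (a+b+c-1) with ⟨e4, l4⟩ | ⟨e4, l4⟩ <;>
  linarith

lemma tri_gt {a b c : ℝ} (ha1 : a ≤ 1) (hb1 : b ≤ 1) (hc1 : c ≤ 1)
    (hs : 2 < a + b + c) :
    max 0 (a+b+c-1) < max 0 (a+b-1) + max 0 (a+c-1) + max 0 (b+c-1) := by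
  have h1 : a+b-1 ≤ max 0 (a+b-1) := le_max_right _ _
  have h2 : a+c-1 ≤ max 0 (a+c-1) := le_max_right _ _
  have h3 : b+c-1 ≤ max 0 (b+c-1) := le_max_right _ _
  rcases max_cases 0 (a+b+c-1) with ⟨e4, l4⟩ | ⟨e4, l4⟩ <;> linarith

lemma tri_zero {a b c : ℝ} (ha : 0 ≤ a) (hb : 0 ≤ b) (hc : 0 ≤ c)
    (hs : a + b + c < 1) :
    max 0 (a+b-1) = 0 ∧ max 0 (a+c-1) = 0 ∧ max 0 (b+c-1) = 0 ∧
      max 0 (a+b+c-1) = 0 := by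
  refine ⟨?_, ?_, ?_, ?_⟩ <;> (apply max_eq_left; linarith)
open Finset

lemma indep_succ {n : ℕ} {T : Finset ℕ} (hind : T ∩ T.image (wsucc n) = ∅)
    {j : ℕ} (hj : j ∈ T) : wsucc n j ∉ T := by
  intro h
  have : wsucc n j ∈ T ∩ T.image (wsucc n) :=
    Finset.mem_inter.2 ⟨h, Finset.mem_image_of_mem _ hj⟩
  simp [hind] at this

lemma indep_pred {n : ℕ} (hn : 5 ≤ n) {T : Finset ℕ} (hT : T ⊆ Finset.Icc 1 (n-1))
    (hind : T ∩ T.image (wsucc n) = ∅) {j : ℕ} (hj : j ∈ T) : wpred n j ∉ T := by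
  intro h
  have := indep_succ hind h
  rw [wsucc_wpred hn (hT hj)] at this
  exact this hj

lemma phi_erase {n : ℕ} (hn : 5 ≤ n) (x : ℕ → ℝ) {T : Finset ℕ}
    (hT : T ⊆ Finset.Icc 1 (n-1)) (hind : T ∩ T.image (wsucc n) = ∅)
    {i : ℕ} (hi : i ∈ T) :
    phiW n x (T.erase i) = phiW n x T
      + max 0 (x i + x (wsucc n i) - 1) + max 0 (x i + x n - 1)
      + max 0 (x (wsucc n i) + x n - 1)
      - max 0 (x i + x (wsucc n i) + x n - 1) := by
  have hiI : i ∈ Finset.Icc 1 (n-1) := hT hi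
  have hsI : wsucc n i ∈ Finset.Icc 1 (n-1) := wsucc_mem_Icc hn hiI
  have hne : wsucc n i ≠ i := wsucc_ne hn hiI
  have hsT : wsucc n i ∉ T := indep_succ hind hi
  have hiIm : i ∉ T.image (wsucc n) := by
    rw [mem_image_wsucc hn hT hiI]
    exact indep_pred hn hT hind hi
  have hsIm : wsucc n i ∈ T.image (wsucc n) := Finset.mem_image_of_mem _ hi
  -- set 1
  have hset1 : Finset.Icc 1 (n-1) \ T.erase i = insert i (Finset.Icc 1 (n-1) \ T) := by
    ext j
    simp only [Finset.mem_sdiff, Finset.mem_erase, Finset.mem_insert]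
    by_cases hj : j = i
    · subst hj; simp [hiI]
    · simp [hj] <;> tauto
  have hnm1 : i ∉ Finset.Icc 1 (n-1) \ T := by simp [hi]
  have e1 : ∑ j ∈ Finset.Icc 1 (n-1) \ T.erase i, max 0 (x j + x (wsucc n j) - 1)
      = max 0 (x i + x (wsucc n i) - 1)
        + ∑ j ∈ Finset.Icc 1 (n-1) \ T, max 0 (x j + x (wsucc n j) - 1) := by
    rw [hset1, Finset.sum_insert hnm1]
  -- set 2
  have himg : (T.erase i).image (wsucc n) = (T.image (wsucc n)).erase (wsucc n i) := by
    ext j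
    simp only [Finset.mem_image, Finset.mem_erase]
    constructor
    · rintro ⟨a, ⟨hai, haT⟩, rfl⟩
      exact ⟨fun h => hai (wsucc_inj hn (hT haT) hiI h), a, haT, rfl⟩
    · rintro ⟨hne', a, ha, rfl⟩
      exact ⟨a, ⟨fun h => hne' (by rw [h]), ha⟩, rfl⟩
  have hset2 : Finset.Icc 1 (n-1) \ (T.erase i ∪ (T.erase i).image (wsucc n))
      = insert i (insert (wsucc n i)
          (Finset.Icc 1 (n-1) \ (T ∪ T.image (wsucc n)))) := by
    rw [himg]
    ext j
    simp only [Finset.mem_sdiff, Finset.mem_union, Finset.mem_erase, Finset.mem_insert]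
    by_cases hj : j = i
    · subst hj; simp [hiI, hiIm]
    · by_cases hj' : j = wsucc n i
      · subst hj'; simp [hsI, hsT, hne]
      · simp [hj, hj'] <;> tauto
  have hnm2a : wsucc n i ∉ Finset.Icc 1 (n-1) \ (T ∪ T.image (wsucc n)) := by
    simp [hsIm]
  have hnm2b : i ∉ insert (wsucc n i) (Finset.Icc 1 (n-1) \ (T ∪ T.image (wsucc n))) := by
    simp [Ne.symm hne, hi]
  have e2 : ∑ j ∈ Finset.Icc 1 (n-1) \ (T.erase i ∪ (T.erase i).image (wsucc n)),
        max 0 (x j + x n - 1)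
      = max 0 (x i + x n - 1) + max 0 (x (wsucc n i) + x n - 1)
        + ∑ j ∈ Finset.Icc 1 (n-1) \ (T ∪ T.image (wsucc n)), max 0 (x j + x n - 1) := by
    rw [hset2, Finset.sum_insert hnm2b, Finset.sum_insert hnm2a]; ring
  have e3 : ∑ j ∈ T.erase i, max 0 (x j + x (wsucc n j) + x n - 1)
      = ∑ j ∈ T, max 0 (x j + x (wsucc n j) + x n - 1)
        - max 0 (x i + x (wsucc n i) + x n - 1) := by
    rw [← Finset.sum_erase_add T _ hi]; ring
  unfold phiW
  rw [e1, e2, e3]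
  ring

lemma indep_insert {n : ℕ} (hn : 5 ≤ n) {T : Finset ℕ} (hT : T ⊆ Finset.Icc 1 (n-1))
    (hind : T ∩ T.image (wsucc n) = ∅) {i : ℕ} (hiI : i ∈ Finset.Icc 1 (n-1))
    (hsT : wsucc n i ∉ T) (hpT : wpred n i ∉ T) :
    (insert i T) ∩ (insert i T).image (wsucc n) = ∅ := by
  rw [Finset.image_insert, Finset.eq_empty_iff_forall_notMem]
  intro j hj
  rw [Finset.mem_inter, Finset.mem_insert, Finset.mem_insert] at hj
  obtain ⟨h1 | h1, h2 | h2⟩ := hj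
  · subst h1; exact wsucc_ne hn hiI h2.symm
  · subst h1
    exact hpT ((mem_image_wsucc hn hT hiI).1 h2)
  · subst h2
    exact hsT h1
  · have : j ∈ T ∩ T.image (wsucc n) := Finset.mem_inter.2 ⟨h1, h2⟩
    simp [hind] at this

lemma phi_insert {n : ℕ} (hn : 5 ≤ n) (x : ℕ → ℝ) {T : Finset ℕ}
    (hT : T ⊆ Finset.Icc 1 (n-1)) (hind : T ∩ T.image (wsucc n) = ∅)
    {i : ℕ} (hiI : i ∈ Finset.Icc 1 (n-1)) (hiT : i ∉ T)
    (hsT : wsucc n i ∉ T) (hpT : wpred n i ∉ T) :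
    phiW n x (insert i T) = phiW n x T
      + max 0 (x i + x (wsucc n i) + x n - 1)
      - max 0 (x i + x (wsucc n i) - 1) - max 0 (x i + x n - 1)
      - max 0 (x (wsucc n i) + x n - 1) := by
  have hsub : insert i T ⊆ Finset.Icc 1 (n-1) := Finset.insert_subset hiI hT
  have hind' := indep_insert hn hT hind hiI hsT hpT
  have h1 := phi_erase hn x hsub hind' (Finset.mem_insert_self i T)
  rw [Finset.erase_insert hiT] at h1
  linarith

theorem exists_good_optimal_T (n : ℕ) (hn : 5 ≤ n) (x : ℕ → ℝ)
    (hx : ∀ i ∈ Finset.Icc 1 n, 0 ≤ x i ∧ x i ≤ 1) :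
    ∃ T : Finset ℕ, T ⊆ Finset.Icc 1 (n - 1) ∧
      T ∩ T.image (wsucc n) = ∅ ∧
      phiW n x T = phiStarW n x ∧
      (∀ i ∈ T, 1 ≤ x i + x (wsucc n i) + x n ∧ x i + x (wsucc n i) + x n ≤ 2) ∧
      (∀ i ∈ Finset.Icc 1 (n - 1),
        1 ≤ x i + x (wsucc n i) + x n → x i + x (wsucc n i) + x n ≤ 2 →
          (wpred n i ∈ T ∨ i ∈ T ∨ wsucc n i ∈ T)) := by
  have hxI : ∀ i ∈ Finset.Icc 1 (n-1), 0 ≤ x i ∧ x i ≤ 1 := by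
    intro i hi
    rw [Finset.mem_Icc] at hi
    exact hx i (Finset.mem_Icc.2 ⟨hi.1, by omega⟩)
  have hxn : 0 ≤ x n ∧ x n ≤ 1 := hx n (Finset.mem_Icc.2 ⟨by omega, le_refl n⟩)
  set C := (Finset.Icc 1 (n-1)).powerset.filter
      (fun T => T ∩ T.image (wsucc n) = ∅) with hC
  have hCne : C.Nonempty := ⟨∅, by simp [hC]⟩
  have hstar : phiStarW n x = C.sup' hCne (phiW n x) := rfl
  have hmemC : ∀ T : Finset ℕ,
      T ∈ C ↔ T ⊆ Finset.Icc 1 (n-1) ∧ T ∩ T.image (wsucc n) = ∅ := by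
    intro T; simp [hC, Finset.mem_filter, Finset.mem_powerset]
  have hub : ∀ T ∈ C, phiW n x T ≤ phiStarW n x := by
    intro T hT; rw [hstar]; exact Finset.le_sup' _ hT
  obtain ⟨T0, hT0C, hT0⟩ := Finset.exists_mem_eq_sup' hCne (phiW n x)
  classical
  set M := C.filter (fun T => phiW n x T = phiStarW n x) with hM
  have hMne : M.Nonempty := ⟨T0, Finset.mem_filter.2 ⟨hT0C, by rw [hstar, hT0]⟩⟩
  set p : ℕ → Prop := fun i => 1 ≤ x i + x (wsucc n i) + x n with hp
  set f : Finset ℕ → ℤ := fun T =>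
    ((n : ℤ) + 1) * (T.filter p).card - T.card with hf
  obtain ⟨T, hTM, hTmax⟩ := Finset.exists_max_image M f hMne
  obtain ⟨hTC, hTphi⟩ := Finset.mem_filter.1 hTM
  obtain ⟨hTsub, hTind⟩ := (hmemC T).1 hTC
  refine ⟨T, hTsub, hTind, hTphi, ?_, ?_⟩
  · -- P3
    intro i hi
    by_contra hcon
    push_neg at hcon
    have hiI := hTsub hi
    have hsI := wsucc_mem_Icc hn hiI
    obtain ⟨ha0, ha1⟩ := hxI i hiI
    obtain ⟨hb0, hb1⟩ := hxI _ hsI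
    have herC : T.erase i ∈ C := by
      rw [hmemC]
      constructor
      · exact (Finset.erase_subset _ _).trans hTsub
      · have hsub2 : (T.erase i) ∩ (T.erase i).image (wsucc n)
            ⊆ T ∩ T.image (wsucc n) :=
          Finset.inter_subset_inter (Finset.erase_subset _ _)
            (Finset.image_subset_image (Finset.erase_subset _ _))
        rw [hTind] at hsub2
        exact Finset.subset_empty.1 hsub2
    have hphe := phi_erase hn x hTsub hTind hi
    rcases lt_or_ge 2 (x i + x (wsucc n i) + x n) with hgt | hle2
    · -- s > 2 : strict improvement, contradiction with optimality
      have := tri_gt ha1 hb1 hxn.2 hgt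
      have hle := hub _ herC
      rw [hTphi] at hphe
      linarith
    · -- then s < 1
      have hlt1 : x i + x (wsucc n i) + x n < 1 := by
        by_contra h'
        push_neg at h'
        linarith [hcon h']
      obtain ⟨z1, z2, z3, z4⟩ := tri_zero ha0 hb0 hxn.1 hlt1
      have hereq : phiW n x (T.erase i) = phiStarW n x := by
        rw [hphe, hTphi, z1, z2, z3, z4]; ring
      have herM : T.erase i ∈ M := Finset.mem_filter.2 ⟨herC, hereq⟩
      have hfe : f (T.erase i) ≤ f T := hTmax _ herM
      have hnotp : ¬ p i := by
        rw [hp]; simp only [not_le]; exact hlt1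
      have hfilter : (T.erase i).filter p = T.filter p := by
        rw [Finset.filter_erase, Finset.erase_eq_of_notMem]
        simp [Finset.mem_filter, hnotp]
      have hcard : (T.erase i).card + 1 = T.card := by
        rw [Finset.card_erase_of_mem hi]
        have : 0 < T.card := Finset.card_pos.2 ⟨i, hi⟩
        omega
      rw [hf] at hfe
      simp only [hfilter] at hfe
      have : ((T.erase i).card : ℤ) + 1 = T.card := by exact_mod_cast hcard
      linarith
  · -- P4
    intro i hiI h1 h2
    by_contra hcon
    push_neg at hcon
    obtain ⟨hpT, hiT, hsT⟩ := hcon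
    have hsI := wsucc_mem_Icc hn hiI
    obtain ⟨ha0, ha1⟩ := hxI i hiI
    obtain ⟨hb0, hb1⟩ := hxI _ hsI
    have hphi := phi_insert hn x hTsub hTind hiI hiT hsT hpT
    have hinC : insert i T ∈ C := by
      rw [hmemC]
      exact ⟨Finset.insert_subset hiI hTsub, indep_insert hn hTsub hTind hiI hsT hpT⟩
    have hge : phiW n x T ≤ phiW n x (insert i T) := by
      have := tri_le ha0 hb0 hxn.1 ha1 hb1 hxn.2 h2
      linarith
    have hle := hub _ hinC
    have hineq : phiW n x (insert i T) = phiStarW n x := le_antisymm hle (by rw [← hTphi]; exact hge)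
    have hinM : insert i T ∈ M := Finset.mem_filter.2 ⟨hinC, hineq⟩
    have hfe : f (insert i T) ≤ f T := hTmax _ hinM
    have hpi : p i := h1
    have hfilter : (insert i T).filter p = insert i (T.filter p) := by
      rw [Finset.filter_insert, if_pos hpi]
    have hnotf : i ∉ T.filter p := fun h => hiT (Finset.mem_filter.1 h).1
    have hcard1 : ((insert i T).filter p).card = (T.filter p).card + 1 := by
      rw [hfilter, Finset.card_insert_of_notMem hnotf]
    have hcard2 : (insert i T).card = T.card + 1 := Finset.card_insert_of_notMem hiT
    rw [hf] at hfe
    simp only [hcard1, hcard2] at hfe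
    push_cast at hfe
    have : (5 : ℤ) ≤ n := by exact_mod_cast hn
    linarith
end

section
/- Let n ≥ 5, x ∈ [0,1]^n, and let T ⊆ {1,…,n−1} satisfy T ∩ (T+1) = ∅ (indices cyclic modulo n−1). Let X_1, …, X_n ⊆ [0,1) be Lebesgue-measurable sets with μ(X_i) = x_i for all i. Then ∑_{i=1}^{n−1} ( μ(X_i ∩ X_{i+1}) + μ(X_i ∩ X_n) ) = φ(T) (index i+1 modulo n−1) holds if and only if the following three conditions are satisfied: (i) μ(X_i ∩ X_{i+1}) + μ(X_i ∩ X_n) + μ(X_{i+1} ∩ X_n) = max{0, x_i + x_{i+1} + x_n − 1} for every i ∈ T; (ii) μ(X_i ∩ X_{i+1}) = max{0, x_i + x_{i+1} − 1} for all i ∈ {1,…,n−1} ∖ T; (iii) μ(X_i ∩ X_n) = max{0, x_i + x_n − 1} for all i ∈ {1,…,n−1} ∖ (T ∪ (T+1)). -/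
open Finset

open MeasureTheory

lemma vol_ne_top' {A : Set ℝ} (h : A ⊆ Set.Ico 0 1) : volume A ≠ ⊤ := by
  have h1 : volume A ≤ volume (Set.Ico (0:ℝ) 1) := measure_mono h
  rw [Real.volume_Ico] at h1; norm_num at h1
  exact ne_top_of_le_ne_top ENNReal.one_ne_top h1

lemma vol_le_one' {A : Set ℝ} (h : A ⊆ Set.Ico 0 1) : (volume A).toReal ≤ 1 := by
  have h1 : volume A ≤ volume (Set.Ico (0:ℝ) 1) := measure_mono h
  rw [Real.volume_Ico] at h1; norm_num at h1
  simpa using ENNReal.toReal_mono ENNReal.one_ne_top h1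

lemma toReal_union_inter' {A B : Set ℝ} (hB : MeasurableSet B)
    (hA : A ⊆ Set.Ico 0 1) (hBs : B ⊆ Set.Ico 0 1) :
    (volume (A ∪ B)).toReal + (volume (A ∩ B)).toReal
      = (volume A).toReal + (volume B).toReal := by
  have key : volume (A ∪ B) + volume (A ∩ B) = volume A + volume B :=
    measure_union_add_inter A hB
  rw [← ENNReal.toReal_add (vol_ne_top' (Set.union_subset hA hBs))
      (vol_ne_top' ((Set.inter_subset_left).trans hA)),
    ← ENNReal.toReal_add (vol_ne_top' hA) (vol_ne_top' hBs), key]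

lemma pair_lb' {A B : Set ℝ} (hB : MeasurableSet B)
    (hA : A ⊆ Set.Ico 0 1) (hBs : B ⊆ Set.Ico 0 1) :
    max 0 ((volume A).toReal + (volume B).toReal - 1) ≤ (volume (A ∩ B)).toReal := by
  have kr := toReal_union_inter' hB hA hBs
  have hU1 := vol_le_one' (Set.union_subset hA hBs)
  exact max_le ENNReal.toReal_nonneg (by linarith)

lemma triple_lb' {A B C : Set ℝ} (hB : MeasurableSet B) (hC : MeasurableSet C)
    (hA : A ⊆ Set.Ico 0 1) (hBs : B ⊆ Set.Ico 0 1) (hCs : C ⊆ Set.Ico 0 1) :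
    max 0 ((volume A).toReal + (volume B).toReal + (volume C).toReal - 1)
      ≤ (volume (A ∩ B)).toReal + (volume (A ∩ C)).toReal + (volume (B ∩ C)).toReal := by
  have k1 := toReal_union_inter' hB hA hBs
  have k2 := toReal_union_inter' hC (Set.union_subset hA hBs) hCs
  have k3 : (volume ((A ∪ B) ∩ C)).toReal
      ≤ (volume (A ∩ C)).toReal + (volume (B ∩ C)).toReal := by
    have hle : volume ((A ∪ B) ∩ C) ≤ volume (A ∩ C) + volume (B ∩ C) := by
      rw [Set.union_inter_distrib_right]; exact measure_union_le _ _
    calc (volume ((A ∪ B) ∩ C)).toReal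
        ≤ (volume (A ∩ C) + volume (B ∩ C)).toReal :=
          ENNReal.toReal_mono (by
            exact ENNReal.add_ne_top.mpr ⟨vol_ne_top' ((Set.inter_subset_left).trans hA),
              vol_ne_top' ((Set.inter_subset_left).trans hBs)⟩) hle
      _ = (volume (A ∩ C)).toReal + (volume (B ∩ C)).toReal :=
          ENNReal.toReal_add (vol_ne_top' ((Set.inter_subset_left).trans hA))
            (vol_ne_top' ((Set.inter_subset_left).trans hBs))
  have hU1 := vol_le_one' (Set.union_subset (Set.union_subset hA hBs) hCs)
  refine max_le (by positivity) (by linarith)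

lemma sum_split_aux (n : ℕ) (hn : 5 ≤ n) (T : Finset ℕ)
    (hT : T ⊆ Finset.Icc 1 (n - 1))
    (hdisj : T ∩ T.image (wsucc n) = ∅) (f g : ℕ → ℝ) :
    ∑ i ∈ Finset.Icc 1 (n - 1), (f i + g i)
      = (∑ i ∈ T, (f i + g i + g (wsucc n i)))
        + ∑ i ∈ Finset.Icc 1 (n - 1) \ T, f i
        + ∑ i ∈ Finset.Icc 1 (n - 1) \ (T ∪ T.image (wsucc n)), g i := by
  classical
  have hsuccmem : ∀ i ∈ Finset.Icc 1 (n - 1), wsucc n i ∈ Finset.Icc 1 (n - 1) := by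
    intro i hi
    simp only [Finset.mem_Icc] at *
    unfold wsucc
    split <;> omega
  have hU : T ∪ T.image (wsucc n) ⊆ Finset.Icc 1 (n - 1) := by
    refine Finset.union_subset hT ?_
    intro j hj
    simp only [Finset.mem_image] at hj
    obtain ⟨i, hi, rfl⟩ := hj
    exact hsuccmem i (hT hi)
  have hinj : ∀ i ∈ T, ∀ j ∈ T, wsucc n i = wsucc n j → i = j := by
    intro i hi j hj h
    have hi' := Finset.mem_Icc.mp (hT hi)
    have hj' := Finset.mem_Icc.mp (hT hj)
    unfold wsucc at h
    split_ifs at h <;> omega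
  have hdisj' : Disjoint T (T.image (wsucc n)) :=
    Finset.disjoint_iff_inter_eq_empty.mpr hdisj
  have e1 : ∑ i ∈ Finset.Icc 1 (n - 1), f i
      = ∑ i ∈ Finset.Icc 1 (n - 1) \ T, f i + ∑ i ∈ T, f i :=
    (Finset.sum_sdiff hT).symm
  have e2 : ∑ i ∈ Finset.Icc 1 (n - 1), g i
      = ∑ i ∈ Finset.Icc 1 (n - 1) \ (T ∪ T.image (wsucc n)), g i
        + (∑ i ∈ T, g i + ∑ i ∈ T, g (wsucc n i)) := by
    rw [← Finset.sum_sdiff hU, Finset.sum_union hdisj', Finset.sum_image hinj]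
  rw [Finset.sum_add_distrib, e1, e2, Finset.sum_add_distrib, Finset.sum_add_distrib]
  ring

theorem squeeze_Xi (n : ℕ) (hn : 5 ≤ n) (x : ℕ → ℝ)
    (hx : ∀ i ∈ Finset.Icc 1 n, 0 ≤ x i ∧ x i ≤ 1)
    (T : Finset ℕ) (hT : T ⊆ Finset.Icc 1 (n - 1))
    (hdisj : T ∩ T.image (wsucc n) = ∅)
    (X : ℕ → Set ℝ)
    (hmeas : ∀ i ∈ Finset.Icc 1 n, MeasurableSet (X i))
    (hsub : ∀ i ∈ Finset.Icc 1 n, X i ⊆ Set.Ico 0 1)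
    (hvol : ∀ i ∈ Finset.Icc 1 n, (volume (X i)).toReal = x i) :
    (∑ i ∈ Finset.Icc 1 (n - 1),
        ((volume (X i ∩ X (wsucc n i))).toReal + (volume (X i ∩ X n)).toReal)
      = phiW n x T)
    ↔
    ((∀ i ∈ T,
        (volume (X i ∩ X (wsucc n i))).toReal + (volume (X i ∩ X n)).toReal +
          (volume (X (wsucc n i) ∩ X n)).toReal
          = max 0 (x i + x (wsucc n i) + x n - 1)) ∧
     (∀ i ∈ Finset.Icc 1 (n - 1) \ T,
        (volume (X i ∩ X (wsucc n i))).toReal = max 0 (x i + x (wsucc n i) - 1)) ∧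
     (∀ i ∈ Finset.Icc 1 (n - 1) \ (T ∪ T.image (wsucc n)),
        (volume (X i ∩ X n)).toReal = max 0 (x i + x n - 1))) := by
  classical
  have hIn : Finset.Icc 1 (n - 1) ⊆ Finset.Icc 1 n := Finset.Icc_subset_Icc_right (by omega)
  have hnmem : n ∈ Finset.Icc 1 n := by simp [Finset.mem_Icc]; omega
  have hsuccmem : ∀ i ∈ Finset.Icc 1 (n - 1), wsucc n i ∈ Finset.Icc 1 (n - 1) := by
    intro i hi
    simp only [Finset.mem_Icc] at *
    unfold wsucc
    split <;> omega
  have hU : T ∪ T.image (wsucc n) ⊆ Finset.Icc 1 (n - 1) := by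
    refine Finset.union_subset hT ?_
    intro j hj
    simp only [Finset.mem_image] at hj
    obtain ⟨i, hi, rfl⟩ := hj
    exact hsuccmem i (hT hi)
  have d1 : ∀ i ∈ T, max 0 (x i + x (wsucc n i) + x n - 1)
      ≤ (volume (X i ∩ X (wsucc n i))).toReal + (volume (X i ∩ X n)).toReal +
          (volume (X (wsucc n i) ∩ X n)).toReal := by
    intro i hi
    have hi1 : i ∈ Finset.Icc 1 n := hIn (hT hi)
    have hs1 : wsucc n i ∈ Finset.Icc 1 n := hIn (hsuccmem i (hT hi))
    have h := triple_lb' (hmeas _ hs1) (hmeas _ hnmem) (hsub _ hi1) (hsub _ hs1) (hsub _ hnmem)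
    rwa [hvol _ hi1, hvol _ hs1, hvol _ hnmem] at h
  have d2 : ∀ i ∈ Finset.Icc 1 (n - 1) \ T, max 0 (x i + x (wsucc n i) - 1)
      ≤ (volume (X i ∩ X (wsucc n i))).toReal := by
    intro i hi
    have hiI := (Finset.mem_sdiff.mp hi).1
    have hi1 : i ∈ Finset.Icc 1 n := hIn hiI
    have hs1 : wsucc n i ∈ Finset.Icc 1 n := hIn (hsuccmem i hiI)
    have h := pair_lb' (hmeas _ hs1) (hsub _ hi1) (hsub _ hs1)
    rwa [hvol _ hi1, hvol _ hs1] at h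
  have d3 : ∀ i ∈ Finset.Icc 1 (n - 1) \ (T ∪ T.image (wsucc n)), max 0 (x i + x n - 1)
      ≤ (volume (X i ∩ X n)).toReal := by
    intro i hi
    have hiI := (Finset.mem_sdiff.mp hi).1
    have hi1 : i ∈ Finset.Icc 1 n := hIn hiI
    have h := pair_lb' (hmeas _ hnmem) (hsub _ hi1) (hsub _ hnmem)
    rwa [hvol _ hi1, hvol _ hnmem] at h
  have key : ∑ i ∈ Finset.Icc 1 (n - 1),
        ((volume (X i ∩ X (wsucc n i))).toReal + (volume (X i ∩ X n)).toReal)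
      = (∑ i ∈ T, ((volume (X i ∩ X (wsucc n i))).toReal + (volume (X i ∩ X n)).toReal +
            (volume (X (wsucc n i) ∩ X n)).toReal))
        + ∑ i ∈ Finset.Icc 1 (n - 1) \ T, (volume (X i ∩ X (wsucc n i))).toReal
        + ∑ i ∈ Finset.Icc 1 (n - 1) \ (T ∪ T.image (wsucc n)), (volume (X i ∩ X n)).toReal :=
    sum_split_aux n hn T hT hdisj
      (fun i => (volume (X i ∩ X (wsucc n i))).toReal)
      (fun i => (volume (X i ∩ X n)).toReal)
  have hA := Finset.sum_le_sum d1
  have hB := Finset.sum_le_sum d2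
  have hC := Finset.sum_le_sum d3
  rw [key]
  unfold phiW
  constructor
  · intro h
    have e1 : ∑ i ∈ T, max 0 (x i + x (wsucc n i) + x n - 1)
        = ∑ i ∈ T, ((volume (X i ∩ X (wsucc n i))).toReal + (volume (X i ∩ X n)).toReal +
            (volume (X (wsucc n i) ∩ X n)).toReal) := by linarith
    have e2 : ∑ i ∈ Finset.Icc 1 (n - 1) \ T, max 0 (x i + x (wsucc n i) - 1)
        = ∑ i ∈ Finset.Icc 1 (n - 1) \ T, (volume (X i ∩ X (wsucc n i))).toReal := by linarith
    have e3 : ∑ i ∈ Finset.Icc 1 (n - 1) \ (T ∪ T.image (wsucc n)), max 0 (x i + x n - 1)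
        = ∑ i ∈ Finset.Icc 1 (n - 1) \ (T ∪ T.image (wsucc n)),
            (volume (X i ∩ X n)).toReal := by linarith
    refine ⟨fun i hi => ((Finset.sum_eq_sum_iff_of_le d1).mp e1 i hi).symm,
      fun i hi => ((Finset.sum_eq_sum_iff_of_le d2).mp e2 i hi).symm,
      fun i hi => ((Finset.sum_eq_sum_iff_of_le d3).mp e3 i hi).symm⟩
  · rintro ⟨c1, c2, c3⟩
    rw [Finset.sum_congr rfl c1, Finset.sum_congr rfl c2, Finset.sum_congr rfl c3]
    ring
end
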